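/- If the parameters m₁₁±, m₂₁±, m₂₂± are purely imaginary and θ is real, then the complex matrix R̂(θ) is unitary: R̂(θ)·R̂(θ)* = I₉, where * denotes conjugate transpose. -/
import Mathlib


open Matrix

/-- The 9×9 exotic braid matrix over ℂ with parameters `a₊, a₋, b₊, b₋, c₊, c₋`. -/
noncomputable def Rhat9C (ap am bp bm cp cm : ℂ) : Matrix (Fin 9) (Fin 9) ℂ :=
  !![ap,0,0,0,0,0,0,0,am;
     0,bp,0,0,0,0,0,bm,0;
     0,0,ap,0,0,0,am,0,0;
     0,0,0,cp,0,cm,0,0,0;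
     0,0,0,0,1,0,0,0,0;
     0,0,0,cm,0,cp,0,0,0;
     0,0,am,0,0,0,ap,0,0;
     0,bm,0,0,0,0,0,bp,0;
     am,0,0,0,0,0,0,0,ap]

/-- `a₊(θ) = (e^{m⁺θ} + e^{m⁻θ})/2` over ℂ. -/
noncomputable def aPC (mp mm : ℂ) (θ : ℝ) : ℂ :=
  (Complex.exp (mp * θ) + Complex.exp (mm * θ)) / 2

/-- `a₋(θ) = (e^{m⁺θ} − e^{m⁻θ})/2` over ℂ. -/
noncomputable def aMC (mp mm : ℂ) (θ : ℝ) : ℂ :=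
  (Complex.exp (mp * θ) - Complex.exp (mm * θ)) / 2

/-- The complex baxterized braid matrix `R̂(θ)`. -/
noncomputable def RhatThetaC (m11p m11m m21p m21m m22p m22m : ℂ) (θ : ℝ) :
    Matrix (Fin 9) (Fin 9) ℂ :=
  Rhat9C (aPC m11p m11m θ) (aMC m11p m11m θ) (aPC m21p m21m θ) (aMC m21p m21m θ)
    (aPC m22p m22m θ) (aMC m22p m22m θ)


lemma key_conj (m : ℂ) (h : m.re = 0) (θ : ℝ) :
    (starRingEnd ℂ) (Complex.exp (m * θ)) = (Complex.exp (m * θ))⁻¹ := by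
  rw [← Complex.exp_conj, ← Complex.exp_neg]
  congr 1
  apply Complex.ext <;> simp [h]

lemma unit1 (mp mm : ℂ) (hp : mp.re = 0) (hm : mm.re = 0) (θ : ℝ) :
    aPC mp mm θ * (starRingEnd ℂ) (aPC mp mm θ)
      + aMC mp mm θ * (starRingEnd ℂ) (aMC mp mm θ) = 1 := by
  simp only [aPC, aMC, map_div₀, map_add, map_sub, key_conj mp hp θ, key_conj mm hm θ,
    Complex.conj_ofNat]
  have h1 := Complex.exp_ne_zero (mp * θ)
  have h2 := Complex.exp_ne_zero (mm * θ)
  field_simp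
  ring

lemma unit2 (mp mm : ℂ) (hp : mp.re = 0) (hm : mm.re = 0) (θ : ℝ) :
    aPC mp mm θ * (starRingEnd ℂ) (aMC mp mm θ)
      + aMC mp mm θ * (starRingEnd ℂ) (aPC mp mm θ) = 0 := by
  simp only [aPC, aMC, map_div₀, map_add, map_sub, key_conj mp hp θ, key_conj mm hm θ,
    Complex.conj_ofNat]
  have h1 := Complex.exp_ne_zero (mp * θ)
  have h2 := Complex.exp_ne_zero (mm * θ)
  field_simp
  ring

set_option maxHeartbeats 1000000 in
/-- If the parameters `m₁₁±, m₂₁±, m₂₂±` are purely imaginary and θ is real,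
then `R̂(θ)` is unitary: `R̂(θ)·R̂(θ)* = I₉`. -/
theorem stmt4 (m11p m11m m21p m21m m22p m22m : ℂ)
    (h11p : m11p.re = 0) (h11m : m11m.re = 0)
    (h21p : m21p.re = 0) (h21m : m21m.re = 0)
    (h22p : m22p.re = 0) (h22m : m22m.re = 0) (θ : ℝ) :
    RhatThetaC m11p m11m m21p m21m m22p m22m θ *
      (RhatThetaC m11p m11m m21p m21m m22p m22m θ)ᴴ = 1 := by
  have U1 := unit1 m11p m11m h11p h11m θ
  have V1 := unit2 m11p m11m h11p h11m θ
  have U2 := unit1 m21p m21m h21p h21m θ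
  have V2 := unit2 m21p m21m h21p h21m θ
  have U3 := unit1 m22p m22m h22p h22m θ
  have V3 := unit2 m22p m22m h22p h22m θ
  ext i j
  fin_cases i <;> fin_cases j <;>
    simp only [RhatThetaC, Rhat9C, Matrix.mul_apply, Fin.sum_univ_succ, Fin.sum_univ_zero,
      Matrix.conjTranspose_apply, Matrix.one_apply, Matrix.cons_val_zero', Matrix.cons_val_succ',
      Matrix.cons_val_zero, Matrix.cons_val_one, Matrix.head_cons, Matrix.vecHead, Matrix.vecTail,
      Matrix.cons_val', Matrix.empty_val', Matrix.cons_val_fin_one, Matrix.cons_val_succ,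
      Matrix.of_apply, Function.comp, map_zero, _root_.map_one, mul_zero, zero_mul, add_zero,
      zero_add, mul_one, one_mul, Fin.mk_zero, Fin.mk_one, if_true, if_false] <;>
    norm_num [Fin.ext_iff] <;>
    first
      | linear_combination U1
      | linear_combination V1
      | linear_combination U2
      | linear_combination V2
      | linear_combination U3
      | linear_combination V3
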